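/- Let φ(z₁, z₂) = log(|z₁|⁴ + |z₁³ − z₂²|) and ‖z‖ = (|z₁|² + |z₂|²)^{1/2}. Then the Lelong number of φ at the origin equals 2, i.e. liminf_{z → 0, z ≠ 0} φ(z)/log‖z‖ = 2. -/

import Mathlib

open Filter

/-- The Lelong number of `φ = log(|z₁|⁴ + |z₁³ - z₂²|)` at the origin equals 2:
`liminf_{z → 0, z ≠ 0} φ(z) / log‖z‖ = 2`, with `‖z‖ = (|z₁|² + |z₂|²)^{1/2}`. -/
theorem lelong_number_example :
    Filter.liminf
      (fun z : ℂ × ℂ =>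
        Real.log (‖z.1‖ ^ 4 + ‖z.1 ^ 3 - z.2 ^ 2‖) /
          Real.log (Real.sqrt (‖z.1‖ ^ 2 + ‖z.2‖ ^ 2)))
      (nhdsWithin (0 : ℂ × ℂ) {z | z ≠ 0}) = 2 := by
  set u : ℂ × ℂ → ℝ := fun z =>
    Real.log (‖z.1‖ ^ 4 + ‖z.1 ^ 3 - z.2 ^ 2‖) /
      Real.log (Real.sqrt (‖z.1‖ ^ 2 + ‖z.2‖ ^ 2)) with hu_def
  set F : Filter (ℂ × ℂ) := nhdsWithin (0 : ℂ × ℂ) {z | z ≠ 0} with hF_def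
  set r : ℂ × ℂ → ℝ := fun z => Real.sqrt (‖z.1‖ ^ 2 + ‖z.2‖ ^ 2)
    with hr_def
  haveI hFne : F.NeBot := by
    show (nhdsWithin (0 : ℂ × ℂ) {(0 : ℂ × ℂ)}ᶜ).NeBot
    infer_instance
  -- the vertical test curve t ↦ (0, t)
  have hcurve : Tendsto (fun t : ℝ => (((0 : ℂ), (t : ℂ)) : ℂ × ℂ)) (nhdsWithin 0 (Set.Ioo 0 1)) F := by
    apply tendsto_nhdsWithin_of_tendsto_nhds_of_eventually_within
    · have hc : Continuous (fun t : ℝ => (((0 : ℂ), (t : ℂ)) : ℂ × ℂ)) :=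
        continuous_const.prodMk Complex.continuous_ofReal
      exact (hc.tendsto' 0 0 (by simp)).mono_left nhdsWithin_le_nhds
    · filter_upwards [self_mem_nhdsWithin] with t ht
      show (((0 : ℂ), (t : ℂ)) : ℂ × ℂ) ≠ 0
      intro h
      have : (t : ℂ) = 0 := (Prod.ext_iff.1 h).2
      exact (ne_of_gt ht.1) (by exact_mod_cast this)
  haveI : (nhdsWithin (0:ℝ) (Set.Ioo 0 1)).NeBot :=
    left_nhdsWithin_Ioo_neBot (by norm_num)
  -- the value of u along the curve is 2
  have hval : ∀ t : ℝ, t ∈ Set.Ioo (0:ℝ) 1 → u ((0 : ℂ), (t : ℂ)) = 2 := by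
    intro t ht
    have ht0 : (0:ℝ) < t := ht.1
    have ht1 : t < 1 := ht.2
    have habs : ‖(t : ℂ)‖ = t := by
      rw [Complex.norm_real, Real.norm_eq_abs, abs_of_pos ht0]
    have hlogt : Real.log t ≠ 0 := ne_of_lt (Real.log_neg ht0 ht1)
    simp only [hu_def, norm_zero]
    rw [habs]
    have h1 : ((0:ℂ)) ^ 3 - ((t:ℂ)) ^ 2 = -((t:ℂ) ^ 2) := by ring
    rw [h1, norm_neg, norm_pow, habs]
    have h2 : Real.sqrt ((0:ℝ) ^ 2 + t ^ 2) = t := by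
      rw [zero_pow (by norm_num), zero_add, Real.sqrt_sq ht0.le]
    rw [h2]
    have h3 : (0:ℝ) ^ 4 + t ^ 2 = t ^ 2 := by ring
    rw [h3, Real.log_pow]
    field_simp
    norm_num
  have hfreq : ∃ᶠ z in F, u z ≤ 2 := by
    apply hcurve.frequently
    apply Eventually.frequently
    filter_upwards [self_mem_nhdsWithin] with t ht
    exact le_of_eq (hval t ht)
  -- preliminary eventual facts
  have hrpos : ∀ z : ℂ × ℂ, z ≠ 0 → 0 < r z := by
    intro z hz
    apply Real.sqrt_pos.2
    rcases eq_or_ne z.1 0 with h1 | h1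
    · have h2 : z.2 ≠ 0 := fun h2 => hz (Prod.ext h1 h2)
      have := norm_pos_iff.mpr h2
      nlinarith [sq_nonneg (‖z.1‖)]
    · have := norm_pos_iff.mpr h1
      nlinarith [sq_nonneg (‖z.2‖)]
  have hr_cont : Tendsto r (nhds (0 : ℂ × ℂ)) (nhds 0) := by
    have : Continuous r := by
      apply Real.continuous_sqrt.comp
      exact ((continuous_norm.comp continuous_fst).pow 2).add
        ((continuous_norm.comp continuous_snd).pow 2)
    have h0 : r 0 = 0 := by simp [hr_def]
    exact h0 ▸ this.tendsto 0
  have hr_small : ∀ᶠ z in F, z ≠ 0 ∧ r z < 1/2 := by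
    have h1 : ∀ᶠ z in F, r z < 1/2 :=
      (hr_cont.mono_left nhdsWithin_le_nhds).eventually (eventually_lt_nhds (by norm_num))
    filter_upwards [h1, self_mem_nhdsWithin] with z h2 h3
    exact ⟨h3, h2⟩
  -- log r tends to -∞
  have hlogr : Tendsto (fun z => Real.log (r z)) F atBot := by
    apply Real.tendsto_log_nhdsGT_zero.comp
    apply tendsto_nhdsWithin_of_tendsto_nhds_of_eventually_within
    · exact hr_cont.mono_left nhdsWithin_le_nhds
    · filter_upwards [self_mem_nhdsWithin] with z hz
      exact hrpos z hz
  -- the comparison function g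
  set g : ℂ × ℂ → ℝ := fun z => 2 + Real.log 3 / Real.log (r z) with hg_def
  have hg_tendsto : Tendsto g F (nhds 2) := by
    have h1 : Tendsto (fun z => -Real.log (r z)) F atTop := tendsto_neg_atTop_iff.2 hlogr
    have h2 : Tendsto (fun z => Real.log 3 / Real.log (r z)) F (nhds 0) := by
      have h3 : Tendsto (fun z => Real.log 3 / (-Real.log (r z))) F (nhds 0) :=
        tendsto_const_nhds.div_atTop h1
      have h4 : Tendsto (fun z => -(Real.log 3 / (-Real.log (r z)))) F (nhds (-0)) := h3.neg
      simp only [neg_zero] at h4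
      convert h4 using 2 with z
      field_simp
    have := (tendsto_const_nhds (x := (2:ℝ)) (f := F)).add h2
    simpa using this
  -- eventually g ≤ u
  have hev : ∀ᶠ z in F, g z ≤ u z := by
    filter_upwards [hr_small] with z hz
    obtain ⟨hz0, hzr⟩ := hz
    have hrp : 0 < r z := hrpos z hz0
    have hr1 : r z < 1 := lt_trans hzr (by norm_num)
    have hlogneg : Real.log (r z) < 0 := Real.log_neg hrp hr1
    have h1 : ‖z.1‖ ≤ r z := by
      rw [hr_def]
      have : ‖z.1‖ = Real.sqrt (‖z.1‖ ^ 2) := by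
        rw [Real.sqrt_sq (norm_nonneg _)]
      rw [this]
      exact Real.sqrt_le_sqrt (by nlinarith [sq_nonneg (‖z.2‖)])
    have h2 : ‖z.2‖ ≤ r z := by
      rw [hr_def]
      have : ‖z.2‖ = Real.sqrt (‖z.2‖ ^ 2) := by
        rw [Real.sqrt_sq (norm_nonneg _)]
      rw [this]
      exact Real.sqrt_le_sqrt (by nlinarith [sq_nonneg (‖z.1‖)])
    set A : ℝ := ‖z.1‖ ^ 4 + ‖z.1 ^ 3 - z.2 ^ 2‖ with hA_def
    have hApos : 0 < A := by
      rcases lt_or_eq_of_le (norm_nonneg (z.1 ^ 3 - z.2 ^ 2)) with h | h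
      · have : (0:ℝ) ≤ ‖z.1‖ ^ 4 := by positivity
        linarith
      · rcases eq_or_ne z.1 0 with h1' | h1'
        · exfalso
          have : z.1 ^ 3 - z.2 ^ 2 = 0 := norm_eq_zero.1 h.symm
          have hz2 : z.2 ^ 2 = 0 := by rw [h1'] at this; simpa using this.symm
          have hz2' : z.2 = 0 := pow_eq_zero_iff (by norm_num) |>.1 hz2
          exact hz0 (Prod.ext h1' hz2')
        · have : 0 < ‖z.1‖ ^ 4 := pow_pos (norm_pos_iff.mpr h1') 4
          linarith
    have hAle : A ≤ 3 * r z ^ 2 := by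
      have e1 : ‖z.1‖ ^ 4 ≤ r z ^ 4 :=
        pow_le_pow_left₀ (norm_nonneg _) h1 4
      have e2 : ‖z.1 ^ 3 - z.2 ^ 2‖ ≤ r z ^ 3 + r z ^ 2 := by
        calc ‖z.1 ^ 3 - z.2 ^ 2‖ ≤ ‖z.1 ^ 3‖ + ‖z.2 ^ 2‖ := by
              exact norm_sub_le _ _
          _ = ‖z.1‖ ^ 3 + ‖z.2‖ ^ 2 := by rw [norm_pow, norm_pow]
          _ ≤ r z ^ 3 + r z ^ 2 :=
              add_le_add (pow_le_pow_left₀ (norm_nonneg _) h1 3)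
                (pow_le_pow_left₀ (norm_nonneg _) h2 2)
      have e3 : r z ^ 4 ≤ r z ^ 2 := by nlinarith
      have e4 : r z ^ 3 ≤ r z ^ 2 := by nlinarith
      calc A ≤ r z ^ 4 + (r z ^ 3 + r z ^ 2) := add_le_add e1 e2
        _ ≤ 3 * r z ^ 2 := by nlinarith
    have hlogA : Real.log A ≤ Real.log 3 + 2 * Real.log (r z) := by
      calc Real.log A ≤ Real.log (3 * r z ^ 2) := Real.log_le_log hApos hAle
        _ = Real.log 3 + 2 * Real.log (r z) := by
            rw [Real.log_mul (by norm_num) (by positivity), Real.log_pow]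
            push_cast; ring
    -- divide by log (r z) < 0
    have hdiv : (Real.log 3 + 2 * Real.log (r z)) / Real.log (r z) ≤ u z := by
      exact div_le_div_of_nonpos_of_le hlogneg.le hlogA
    have heq : g z = (Real.log 3 + 2 * Real.log (r z)) / Real.log (r z) := by
      show 2 + Real.log 3 / Real.log (r z) = _
      rw [add_div, mul_div_assoc, div_self (ne_of_lt hlogneg), mul_one, add_comm]
    rw [heq]
    exact hdiv
  -- boundedness facts
  have hg_bdd : F.IsBoundedUnder (· ≥ ·) g := hg_tendsto.isBoundedUnder_ge
  have hu_bdd : F.IsBoundedUnder (· ≥ ·) u := by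
    obtain ⟨b, hb⟩ := hg_bdd
    refine ⟨b, ?_⟩
    rw [eventually_map] at hb ⊢
    filter_upwards [hb, hev] with z h1 h2
    exact le_trans h1 h2
  have hu_cobdd : F.IsCoboundedUnder (· ≥ ·) u :=
    Filter.IsCoboundedUnder.of_frequently_le hfreq
  -- conclude
  apply le_antisymm
  · exact Filter.liminf_le_of_frequently_le hfreq hu_bdd
  · have h1 : Filter.liminf g F = 2 := hg_tendsto.liminf_eq
    calc (2:ℝ) = Filter.liminf g F := h1.symm
      _ ≤ Filter.liminf u F := Filter.liminf_le_liminf hev hg_bdd hu_cobdd
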